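/- Let L be an N×N real matrix with η^T L η ≥ 0 for all η ∈ ℝ^N, let ν be a diagonal matrix with strictly negative diagonal entries, let J be an invertible N×N matrix, and let σ > 0. Then the matrix I - σ J L ν J⁻¹ is invertible. -/
import Mathlib


open Matrix

/-- If L has nonnegative quadratic form, ν is diagonal with strictly negative
diagonal entries, J is invertible and σ > 0, then I - σ J L ν J⁻¹ is invertible. -/
theorem stmt_3 (N : ℕ) (L J : Matrix (Fin N) (Fin N) ℝ) (ν : Fin N → ℝ) (σ : ℝ)
    (hquad : ∀ η : Fin N → ℝ, 0 ≤ η ⬝ᵥ L.mulVec η)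
    (hν : ∀ i, ν i < 0)
    (hJ : IsUnit J)
    (hσ : 0 < σ) :
    IsUnit (1 - σ • (J * L * Matrix.diagonal ν * J⁻¹)) := by
  rw [Matrix.isUnit_iff_isUnit_det, isUnit_iff_ne_zero]
  intro hdet
  obtain ⟨v, hv, hMv⟩ := (Matrix.exists_mulVec_eq_zero_iff).mpr hdet
  have hJJ : J⁻¹ * J = 1 := Matrix.nonsing_inv_mul J ((Matrix.isUnit_iff_isUnit_det J).mp hJ)
  set D := Matrix.diagonal ν with hD
  set y := J⁻¹ *ᵥ v with hy
  have hveq : v = σ • ((J * L * D * J⁻¹) *ᵥ v) := by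
    have h := hMv
    rw [Matrix.sub_mulVec, Matrix.one_mulVec, Matrix.smul_mulVec, sub_eq_zero] at h
    exact h
  have hyeq : y = σ • ((L * D) *ᵥ y) := by
    calc y = J⁻¹ *ᵥ (σ • ((J * L * D * J⁻¹) *ᵥ v)) := by rw [hy, ← hveq]
    _ = σ • ((J⁻¹ * (J * L * D * J⁻¹)) *ᵥ v) := by
        rw [Matrix.mulVec_smul, Matrix.mulVec_mulVec]
    _ = σ • ((L * D * J⁻¹) *ᵥ v) := by
        rw [show J⁻¹ * (J * L * D * J⁻¹) = (J⁻¹ * J) * (L * D * J⁻¹) by simp [mul_assoc],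
          hJJ, one_mul]
    _ = σ • ((L * D) *ᵥ y) := by rw [hy, ← Matrix.mulVec_mulVec]
  set w := D *ᵥ y with hw
  have hLw : y = σ • (L *ᵥ w) := by
    rw [hyeq, hw, ← Matrix.mulVec_mulVec]
  have hdot : w ⬝ᵥ y = σ * (w ⬝ᵥ (L *ᵥ w)) := by
    rw [hLw]
    simp [dotProduct_smul, smul_eq_mul]
  have hnonneg : 0 ≤ w ⬝ᵥ y := by
    rw [hdot]
    exact mul_nonneg hσ.le (hquad w)
  have hsum : w ⬝ᵥ y = ∑ i, ν i * y i * y i := by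
    simp [dotProduct, hw, hD, Matrix.mulVec_diagonal]
  have hterm : ∀ i ∈ Finset.univ, ν i * y i * y i ≤ 0 := by
    intro i _
    rw [mul_assoc]
    exact mul_nonpos_of_nonpos_of_nonneg (hν i).le (mul_self_nonneg _)
  have hy0 : y = 0 := by
    have hsum0 : ∑ i, ν i * y i * y i = 0 := by
      have h1 : ∑ i, ν i * y i * y i ≤ 0 := Finset.sum_nonpos hterm
      have h2 : 0 ≤ ∑ i, ν i * y i * y i := hsum ▸ hnonneg
      linarith
    funext i
    have h0 := (Finset.sum_eq_zero_iff_of_nonpos hterm).mp hsum0 i (Finset.mem_univ i)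
    have : y i * y i = 0 := by
      rcases mul_eq_zero.mp (by rw [mul_assoc] at h0; exact h0) with h | h
      · exact absurd h (hν i).ne
      · exact h
    simpa using mul_self_eq_zero.mp this
  have : v = 0 := by
    have : (J * L * D * J⁻¹) *ᵥ v = (J * L * D) *ᵥ y := by
      rw [hy, Matrix.mulVec_mulVec]
    rw [hveq, this, hy0, Matrix.mulVec_zero, smul_zero]
  exact hv this
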